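/- If H is a fully invariant subgroup of an abelian group G and both H and G/H are strongly Hopfian, then G is strongly Hopfian. -/

import Mathlib

/-- An abelian group is strongly Hopfian if for every endomorphism `φ`,
the ascending chain `ker φ ≤ ker φ² ≤ …` is eventually stationary. -/
def StronglyHopfian (G : Type*) [AddCommGroup G] : Prop :=
  ∀ φ : AddMonoid.End G, ∃ n : ℕ, ∀ m : ℕ, n ≤ m →
    AddMonoidHom.ker (φ ^ m : G →+ G) = AddMonoidHom.ker (φ ^ n : G →+ G)

theorem stmt8 {G : Type*} [AddCommGroup G] (H : AddSubgroup G)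
    (hfi : ∀ ψ : AddMonoid.End G, H.map (ψ : G →+ G) ≤ H)
    (hH : StronglyHopfian H) (hQ : StronglyHopfian (G ⧸ H)) :
    StronglyHopfian G := by
  intro φ
  have hinv : ∀ x : G, x ∈ H → φ x ∈ H := fun x hx => hfi φ ⟨x, hx, rfl⟩
  let ψ : AddMonoid.End H :=
    AddMonoidHom.codRestrict ((φ : G →+ G).comp H.subtype) H (fun x => hinv x x.2)
  let φq : AddMonoid.End (G ⧸ H) := QuotientAddGroup.map H H φ (fun x hx => hinv x hx)
  have hψ : ∀ (k : ℕ) (x : H), ((ψ ^ k) x : G) = (φ ^ k : G →+ G) x := by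
    intro k
    induction k with
    | zero => intro x; simp
    | succ k ih =>
      intro x
      rw [pow_succ, pow_succ]
      have : (ψ ^ k * ψ) x = (ψ ^ k) (ψ x) := rfl
      rw [this]
      have h2 : (φ ^ k * φ) (x : G) = (φ ^ k) (φ (x : G)) := rfl
      rw [h2, ih]
      rfl
  have hφq : ∀ (k : ℕ) (x : G),
      (φq ^ k) (QuotientAddGroup.mk x) = QuotientAddGroup.mk ((φ ^ k) x) := by
    intro k
    induction k with
    | zero => intro x; simp
    | succ k ih =>
      intro x
      rw [pow_succ, pow_succ]
      have : (φq ^ k * φq) (QuotientAddGroup.mk x) = (φq ^ k) (φq (QuotientAddGroup.mk x)) := rfl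
      rw [this]
      have hq : φq (QuotientAddGroup.mk x) = QuotientAddGroup.mk (φ x) := rfl
      rw [hq, ih]
      rfl
  obtain ⟨n₁, h1⟩ := hH ψ
  obtain ⟨n₂, h2⟩ := hQ φq
  refine ⟨n₁ + n₂, fun m hm => ?_⟩
  ext x
  show (φ ^ m) x = 0 ↔ (φ ^ (n₁ + n₂)) x = 0
  constructor
  · intro hx
    -- image in quotient killed by φq^m, hence by φq^{n₂}
    have hqm : (φq ^ m) (QuotientAddGroup.mk x) = 0 := by
      rw [hφq]
      simp [show ((φ ^ m : AddMonoid.End G) : G →+ G) x = 0 from hx]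
    have hqn : (φq ^ n₂) (QuotientAddGroup.mk x) = 0 := by
      have hk : QuotientAddGroup.mk x ∈ AddMonoidHom.ker (φq ^ m : (G ⧸ H) →+ (G ⧸ H)) := hqm
      rw [h2 m (by omega)] at hk
      exact hk
    have hmem : (φ ^ n₂) x ∈ H := by
      rw [hφq] at hqn
      exact (QuotientAddGroup.eq_zero_iff _).mp hqn
    set y : H := ⟨(φ ^ n₂) x, hmem⟩ with hy
    have hy1 : (ψ ^ (m - n₂)) y = 0 := by
      apply Subtype.ext
      rw [hψ]
      show (φ ^ (m - n₂)) ((φ ^ n₂) x) = (0 : G)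
      have : (φ ^ (m - n₂)) ((φ ^ n₂) x) = (φ ^ (m - n₂) * φ ^ n₂) x := rfl
      rw [this, ← pow_add]
      have : m - n₂ + n₂ = m := by omega
      rw [this]
      exact hx
    have hy2 : (ψ ^ n₁) y = 0 := by
      have hk : y ∈ AddMonoidHom.ker (ψ ^ (m - n₂) : H →+ H) := hy1
      rw [h1 (m - n₂) (by omega)] at hk
      exact hk
    have : (φ ^ (n₁ + n₂)) x = (φ ^ n₁) ((φ ^ n₂) x) := by rw [pow_add]; rfl
    rw [this]
    have : (φ ^ n₁) ((φ ^ n₂) x) = ((ψ ^ n₁) y : G) := by rw [hψ]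
    rw [this, hy2]
    rfl
  · intro hx
    have : (φ ^ m) x = (φ ^ (m - (n₁ + n₂))) ((φ ^ (n₁ + n₂)) x) := by
      have h : (φ ^ (m - (n₁ + n₂))) ((φ ^ (n₁ + n₂)) x) = (φ ^ (m - (n₁ + n₂)) * φ ^ (n₁ + n₂)) x := rfl
      rw [h, ← pow_add]
      rw [Nat.sub_add_cancel hm]
    rw [this, hx]
    simp
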